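/- For any given incentive profile u, if f and f̄ are both Wardrop equilibrium flows of a routing game with path-specific node costs (edge and base node costs nonnegative, continuous, nondecreasing), then every path has the same cost under both flows: c_p(f,u) = c_p(f̄,u) for every path p. -/
import Mathlib


open Set MeasureTheory intervalIntegral

section RoutingGame

variable {E V P : Type*} [Fintype E] [Fintype V] [Fintype P] [Nonempty P]
  [DecidableEq E] [DecidableEq V]

/-- Edge flow: total flow of paths containing edge `e`. -/
noncomputable def edgeFlow (pathE : P → Finset E) (f : P → ℝ) (e : E) : ℝ :=
  ∑ p ∈ Finset.univ.filter (fun p => e ∈ pathE p), f p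

/-- Node flow: total flow of paths containing node `v`. -/
noncomputable def nodeFlow (pathV : P → Finset V) (f : P → ℝ) (v : V) : ℝ :=
  ∑ p ∈ Finset.univ.filter (fun p => v ∈ pathV p), f p

/-- Feasible flows: nonnegative, summing to one. -/
def Feasible (f : P → ℝ) : Prop := (∀ p, 0 ≤ f p) ∧ ∑ p, f p = 1

/-- Path cost with additive path-specific node incentives. -/
noncomputable def pathCost (pathE : P → Finset E) (pathV : P → Finset V)
    (ce : E → ℝ → ℝ) (cv : V → ℝ → ℝ) (u : V → P → ℝ) (f : P → ℝ) (p : P) : ℝ :=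
  (∑ e ∈ pathE p, ce e (edgeFlow pathE f e)) +
  (∑ v ∈ pathV p, (cv v (nodeFlow pathV f v) + u v p))

/-- Wardrop equilibrium: every used path has minimal cost. -/
def IsWardrop (pathE : P → Finset E) (pathV : P → Finset V)
    (ce : E → ℝ → ℝ) (cv : V → ℝ → ℝ) (u : V → P → ℝ) (f : P → ℝ) : Prop :=
  ∀ p q : P, 0 < f p →
    pathCost pathE pathV ce cv u f p ≤ pathCost pathE pathV ce cv u f q

/-- The potential function `Φ(f,u)`. -/
noncomputable def potential (pathE : P → Finset E) (pathV : P → Finset V)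
    (ce : E → ℝ → ℝ) (cv : V → ℝ → ℝ) (u : V → P → ℝ) (f : P → ℝ) : ℝ :=
  (∑ e, ∫ s in (0:ℝ)..(edgeFlow pathE f e), ce e s) +
  (∑ v, ∫ s in (0:ℝ)..(nodeFlow pathV f v), cv v s) +
  (∑ p, f p * ∑ v ∈ pathV p, u v p)

/-- Social cost. -/
noncomputable def socialCost (pathE : P → Finset E) (pathV : P → Finset V)
    (ce : E → ℝ → ℝ) (cv : V → ℝ → ℝ) (u : V → P → ℝ) (f : P → ℝ) : ℝ :=
  ∑ p, f p * pathCost pathE pathV ce cv u f p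

lemma flow_mem_Icc {f : P → ℝ} (hf : Feasible f) (s : Finset P) :
    (∑ p ∈ s, f p) ∈ Set.Icc (0:ℝ) 1 := by
  constructor
  · exact Finset.sum_nonneg fun p _ => hf.1 p
  · rw [← hf.2]
    exact Finset.sum_le_sum_of_subset_of_nonneg (Finset.subset_univ s)
      (fun p _ _ => hf.1 p)

lemma swap_sum {I Q : Type*} [Fintype I] [Fintype Q] [DecidableEq I] (S : Q → Finset I)
    (g : Q → ℝ) (a : I → ℝ) :
    ∑ p, g p * ∑ i ∈ S p, a i
      = ∑ i, a i * ∑ p ∈ Finset.univ.filter (fun p => i ∈ S p), g p := by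
  classical
  simp only [Finset.mul_sum]
  rw [Finset.sum_comm' (s := Finset.univ) (t := S) (t' := Finset.univ)
      (s' := fun i => Finset.univ.filter (fun p => i ∈ S p)) (by simp)]
  exact Finset.sum_congr rfl fun i _ => Finset.sum_congr rfl fun p _ => mul_comm _ _

lemma variational_ineq (pathE : P → Finset E) (pathV : P → Finset V)
    (ce : E → ℝ → ℝ) (cv : V → ℝ → ℝ) (u : V → P → ℝ)
    {f g : P → ℝ} (hf : Feasible f) (hg : Feasible g)
    (heqf : IsWardrop pathE pathV ce cv u f) :
    ∑ p, f p * pathCost pathE pathV ce cv u f p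
      ≤ ∑ p, g p * pathCost pathE pathV ce cv u f p := by
  classical
  set C : P → ℝ := pathCost pathE pathV ce cv u f with hC
  obtain ⟨q0, -, hq0⟩ := Finset.exists_min_image Finset.univ C Finset.univ_nonempty
  have hused : ∀ p, 0 < f p → C p = C q0 := fun p hp =>
    le_antisymm (heqf p q0 hp) (hq0 p (Finset.mem_univ p))
  have h1 : ∑ p, f p * C p = C q0 := by
    have : ∀ p ∈ Finset.univ, f p * C p = f p * C q0 := by
      intro p _
      rcases lt_or_eq_of_le (hf.1 p) with hp | hp
      · rw [hused p hp]
      · rw [← hp]; ring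
    rw [Finset.sum_congr rfl this, ← Finset.sum_mul, hf.2, one_mul]
  have h2 : C q0 ≤ ∑ p, g p * C p := by
    calc C q0 = ∑ p, g p * C q0 := by rw [← Finset.sum_mul, hg.2, one_mul]
      _ ≤ ∑ p, g p * C p :=
        Finset.sum_le_sum fun p _ =>
          mul_le_mul_of_nonneg_left (hq0 p (Finset.mem_univ p)) (hg.1 p)
  rw [h1]; exact h2

lemma mono_prod_nonneg {c : ℝ → ℝ} (hm : MonotoneOn c (Set.Icc 0 1))
    {a b : ℝ} (ha : a ∈ Set.Icc (0:ℝ) 1) (hb : b ∈ Set.Icc (0:ℝ) 1) :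
    0 ≤ (c a - c b) * (a - b) := by
  rcases le_total a b with h | h
  · have := hm ha hb h; nlinarith
  · have := hm hb ha h; nlinarith

lemma eq_of_mono_prod_zero {c : ℝ → ℝ} (hm : MonotoneOn c (Set.Icc 0 1))
    {a b : ℝ} (ha : a ∈ Set.Icc (0:ℝ) 1) (hb : b ∈ Set.Icc (0:ℝ) 1)
    (h : (c a - c b) * (a - b) = 0) : c a = c b := by
  rcases mul_eq_zero.mp h with h' | h'
  · linarith [sub_eq_zero.mp h']
  · have : a = b := by linarith [sub_eq_zero.mp h']
    rw [this]

/-- Any two Wardrop equilibrium flows give every path the same cost. -/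
theorem wardrop_pathCosts_agree
    (pathE : P → Finset E) (pathV : P → Finset V)
    (ce : E → ℝ → ℝ) (cv : V → ℝ → ℝ) (u : V → P → ℝ)
    (hce_nn : ∀ e, ∀ x ∈ Set.Icc (0:ℝ) 1, 0 ≤ ce e x)
    (hce_cont : ∀ e, ContinuousOn (ce e) (Set.Icc (0:ℝ) 1))
    (hce_mono : ∀ e, MonotoneOn (ce e) (Set.Icc (0:ℝ) 1))
    (hcv_nn : ∀ v, ∀ x ∈ Set.Icc (0:ℝ) 1, 0 ≤ cv v x)
    (hcv_cont : ∀ v, ContinuousOn (cv v) (Set.Icc (0:ℝ) 1))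
    (hcv_mono : ∀ v, MonotoneOn (cv v) (Set.Icc (0:ℝ) 1))
    (f fbar : P → ℝ) (hf : Feasible f) (hfbar : Feasible fbar)
    (heqf : IsWardrop pathE pathV ce cv u f)
    (heqfbar : IsWardrop pathE pathV ce cv u fbar) :
    ∀ p : P, pathCost pathE pathV ce cv u f p = pathCost pathE pathV ce cv u fbar p := by
  classical
  set Cf : P → ℝ := pathCost pathE pathV ce cv u f with hCf
  set Cb : P → ℝ := pathCost pathE pathV ce cv u fbar with hCb
  have h1 : ∑ p, f p * Cf p ≤ ∑ p, fbar p * Cf p :=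
    variational_ineq pathE pathV ce cv u hf hfbar heqf
  have h2 : ∑ p, fbar p * Cb p ≤ ∑ p, f p * Cb p :=
    variational_ineq pathE pathV ce cv u hfbar hf heqfbar
  set d : P → ℝ := fun p => f p - fbar p with hd
  have hkey : ∑ p, d p * (Cf p - Cb p) ≤ 0 := by
    have : ∑ p, d p * (Cf p - Cb p)
        = (∑ p, f p * Cf p - ∑ p, fbar p * Cf p)
          + (∑ p, fbar p * Cb p - ∑ p, f p * Cb p) := by
      rw [← Finset.sum_sub_distrib, ← Finset.sum_sub_distrib, ← Finset.sum_add_distrib]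
      exact Finset.sum_congr rfl fun p _ => by simp [hd]; ring
    rw [this]; linarith
  -- membership of flows in [0,1]
  have hafe : ∀ e, edgeFlow pathE f e ∈ Set.Icc (0:ℝ) 1 := fun e => flow_mem_Icc hf _
  have habe : ∀ e, edgeFlow pathE fbar e ∈ Set.Icc (0:ℝ) 1 := fun e => flow_mem_Icc hfbar _
  have hnfv : ∀ v, nodeFlow pathV f v ∈ Set.Icc (0:ℝ) 1 := fun v => flow_mem_Icc hf _
  have hnbv : ∀ v, nodeFlow pathV fbar v ∈ Set.Icc (0:ℝ) 1 := fun v => flow_mem_Icc hfbar _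
  -- expand the key sum by edges and nodes
  have hdiff : ∀ p, Cf p - Cb p
      = (∑ e ∈ pathE p, (ce e (edgeFlow pathE f e) - ce e (edgeFlow pathE fbar e)))
        + (∑ v ∈ pathV p, (cv v (nodeFlow pathV f v) - cv v (nodeFlow pathV fbar v))) := by
    intro p
    simp only [hCf, hCb, pathCost, Finset.sum_sub_distrib, Finset.sum_add_distrib]
    ring
  have hexp : ∑ p, d p * (Cf p - Cb p)
      = (∑ e, (ce e (edgeFlow pathE f e) - ce e (edgeFlow pathE fbar e))
            * (edgeFlow pathE f e - edgeFlow pathE fbar e))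
        + (∑ v, (cv v (nodeFlow pathV f v) - cv v (nodeFlow pathV fbar v))
            * (nodeFlow pathV f v - nodeFlow pathV fbar v)) := by
    calc ∑ p, d p * (Cf p - Cb p)
        = ∑ p, (d p * ∑ e ∈ pathE p, (ce e (edgeFlow pathE f e) - ce e (edgeFlow pathE fbar e))
            + d p * ∑ v ∈ pathV p, (cv v (nodeFlow pathV f v) - cv v (nodeFlow pathV fbar v))) := by
          refine Finset.sum_congr rfl fun p _ => ?_
          rw [hdiff p, mul_add]
      _ = (∑ p, d p * ∑ e ∈ pathE p, (ce e (edgeFlow pathE f e) - ce e (edgeFlow pathE fbar e)))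
          + ∑ p, d p * ∑ v ∈ pathV p, (cv v (nodeFlow pathV f v) - cv v (nodeFlow pathV fbar v)) :=
          Finset.sum_add_distrib
      _ = _ := by
          rw [swap_sum pathE d (fun e => ce e (edgeFlow pathE f e) - ce e (edgeFlow pathE fbar e)),
              swap_sum pathV d (fun v => cv v (nodeFlow pathV f v) - cv v (nodeFlow pathV fbar v))]
          congr 1
          · refine Finset.sum_congr rfl fun e _ => ?_
            have hde : ∑ p ∈ Finset.univ.filter (fun p => e ∈ pathE p), d p
                = edgeFlow pathE f e - edgeFlow pathE fbar e := by
              simp only [hd, edgeFlow, Finset.sum_sub_distrib]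
            rw [hde]
          · refine Finset.sum_congr rfl fun v _ => ?_
            have hdv : ∑ p ∈ Finset.univ.filter (fun p => v ∈ pathV p), d p
                = nodeFlow pathV f v - nodeFlow pathV fbar v := by
              simp only [hd, nodeFlow, Finset.sum_sub_distrib]
            rw [hdv]
  -- each summand is nonnegative, the total is ≤ 0, so each is zero
  have hEnn : ∀ e ∈ Finset.univ, 0 ≤ (ce e (edgeFlow pathE f e) - ce e (edgeFlow pathE fbar e))
      * (edgeFlow pathE f e - edgeFlow pathE fbar e) :=
    fun e _ => mono_prod_nonneg (hce_mono e) (hafe e) (habe e)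
  have hVnn : ∀ v ∈ Finset.univ, 0 ≤ (cv v (nodeFlow pathV f v) - cv v (nodeFlow pathV fbar v))
      * (nodeFlow pathV f v - nodeFlow pathV fbar v) :=
    fun v _ => mono_prod_nonneg (hcv_mono v) (hnfv v) (hnbv v)
  have hE0 : ∀ e ∈ Finset.univ, (ce e (edgeFlow pathE f e) - ce e (edgeFlow pathE fbar e))
      * (edgeFlow pathE f e - edgeFlow pathE fbar e) = 0 := by
    rw [← Finset.sum_eq_zero_iff_of_nonneg hEnn]
    have hEs := Finset.sum_nonneg hEnn
    have hVs := Finset.sum_nonneg hVnn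
    rw [hexp] at hkey
    linarith
  have hV0 : ∀ v ∈ Finset.univ, (cv v (nodeFlow pathV f v) - cv v (nodeFlow pathV fbar v))
      * (nodeFlow pathV f v - nodeFlow pathV fbar v) = 0 := by
    rw [← Finset.sum_eq_zero_iff_of_nonneg hVnn]
    have hEs := Finset.sum_nonneg hEnn
    have hVs := Finset.sum_nonneg hVnn
    rw [hexp] at hkey
    linarith
  have hEeq : ∀ e, ce e (edgeFlow pathE f e) = ce e (edgeFlow pathE fbar e) :=
    fun e => eq_of_mono_prod_zero (hce_mono e) (hafe e) (habe e) (hE0 e (Finset.mem_univ e))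
  have hVeq : ∀ v, cv v (nodeFlow pathV f v) = cv v (nodeFlow pathV fbar v) :=
    fun v => eq_of_mono_prod_zero (hcv_mono v) (hnfv v) (hnbv v) (hV0 v (Finset.mem_univ v))
  intro p
  rw [hCf, hCb] at *
  simp only [pathCost]
  congr 1
  · exact Finset.sum_congr rfl fun e _ => hEeq e
  · exact Finset.sum_congr rfl fun v _ => by rw [hVeq v]

end RoutingGame
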